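/- Let s > 0 and define G̃_s(x) = ∫₀^∞ exp(−πx²/y − y/(4π))·y^{−(1+(1−s)/2)} dy for x ∈ ℝ. Then for every p ∈ [1,∞] with s > 1 − 1/p (where 1/∞ = 0), the function G̃_s belongs to L^p(ℝ). -/

import Mathlib

open MeasureTheory Real
open scoped ENNReal NNReal

/-- The (unnormalized) Bessel potential kernel of order `s` in one dimension, given by the
subordination formula `G̃ₛ(x) = ∫₀^∞ e^{-πx²/y - y/(4π)} y^{-(1+(1-s)/2)} dy`. -/
noncomputable def besselKernel (s : ℝ) (x : ℝ) : ℝ :=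
  ∫ y in Set.Ioi (0:ℝ),
    Real.exp (-(π * x ^ 2) / y - y / (4 * π)) * y ^ (-(1 + (1 - s) / 2))

namespace BesselAux

open Set

theorem measurable_rpow_const' (a : ℝ) : Measurable fun y : ℝ => y ^ a :=
  measurable_of_continuousOn_compl_singleton 0 (continuousOn_of_forall_continuousAt
    fun x hx => Real.continuousAt_rpow_const x a (Or.inl hx))

theorem pow_div_fact_le_exp {x : ℝ} (hx : 0 ≤ x) (n : ℕ) :
    x ^ n / (Nat.factorial n : ℝ) ≤ Real.exp x :=
  calc x ^ n / (Nat.factorial n : ℝ)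
      ≤ ∑ i ∈ Finset.range (n + 1), x ^ i / (Nat.factorial i : ℝ) :=
        Finset.single_le_sum (f := fun i => x ^ i / (Nat.factorial i : ℝ))
          (fun i _ => by positivity) (Finset.self_mem_range_succ n)
    _ ≤ Real.exp x := Real.sum_le_exp_of_nonneg hx _

theorem expA {x y : ℝ} (hy : 0 < y) :
    Real.exp (-(π * x ^ 2) / y - y / (4 * π)) ≤
      Real.exp (-(|x| / 2)) * Real.exp (-(π * x ^ 2 / 2 / y)) := by
  rw [← Real.exp_add, Real.exp_le_exp]
  have hrw : π * x ^ 2 / 2 / y = π * x ^ 2 / (2 * y) := by ring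
  rw [hrw]
  have key : |x| / 2 ≤ π * x ^ 2 / (2 * y) + y / (4 * π) := by
    rw [div_add_div _ _ (by positivity) (by positivity),
      div_le_div_iff₀ (by norm_num) (by positivity)]
    have habs : (π * |x|) ^ 2 = π ^ 2 * x ^ 2 := by rw [mul_pow, sq_abs]
    nlinarith [sq_nonneg (y - π * |x|), habs, sq_nonneg (π * x), hy, pi_pos]
  have hsplit : π * x ^ 2 / y = π * x ^ 2 / (2 * y) + π * x ^ 2 / (2 * y) := by ring
  have hneg : -(π * x ^ 2) / y = -(π * x ^ 2 / y) := by ring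
  linarith [key, hsplit, hneg]

theorem expB {x y : ℝ} (hy : 0 < y) :
    Real.exp (-(π * x ^ 2) / y - y / (4 * π)) ≤
      Real.exp (-(|x| / 2)) * Real.exp (-(y / (8 * π))) := by
  rw [← Real.exp_add, Real.exp_le_exp]
  have key : |x| / 2 ≤ π * x ^ 2 / y + y / (8 * π) := by
    rw [div_add_div _ _ (by positivity) (by positivity),
      div_le_div_iff₀ (by norm_num) (by positivity)]
    have habs2 : (2 * π * |x|) ^ 2 = 4 * π ^ 2 * x ^ 2 := by
      rw [mul_pow, mul_pow, sq_abs]; ring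
    nlinarith [sq_nonneg (y - 2 * π * |x|), habs2, sq_nonneg (π * x), hy, pi_pos]
  have hsplit : y / (4 * π) = y / (8 * π) + y / (8 * π) := by ring
  have hneg : -(π * x ^ 2) / y = -(π * x ^ 2 / y) := by ring
  linarith [key, hsplit, hneg]

theorem intB {s : ℝ} (hs : 1 < s) :
    IntegrableOn (fun y : ℝ => Real.exp (-(y / (8 * π))) * y ^ ((s - 3) / 2)) (Ioi 0) := by
  have h := integrableOn_rpow_mul_exp_neg_mul_rpow (p := 1) (s := (s - 3) / 2)
    (b := (8 * π)⁻¹) (by linarith) one_pos (by positivity)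
  refine h.congr_fun (fun y hy => ?_) measurableSet_Ioi
  dsimp only
  rw [Real.rpow_one, mul_comm]
  congr 2
  field_simp

theorem intA {c a : ℝ} (hc : 0 < c) (ha : a < -1) :
    IntegrableOn (fun y : ℝ => Real.exp (-(c / y)) * y ^ a) (Ioi 0) := by
  have hmeas : Measurable fun y : ℝ => Real.exp (-(c / y)) * y ^ a :=
    (Real.measurable_exp.comp ((measurable_const.div measurable_id).neg)).mul
      (measurable_rpow_const' a)
  have hsplit : Ioi (0:ℝ) = Ioc 0 1 ∪ Ioi 1 := (Ioc_union_Ioi_eq_Ioi zero_le_one).symm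
  rw [hsplit, integrableOn_union]
  constructor
  · set n : ℕ := ⌈-a⌉₊ with hn
    refine Measure.integrableOn_of_bounded (by simp) hmeas.aestronglyMeasurable
      (M := (Nat.factorial n : ℝ) / c ^ n) ?_
    filter_upwards [ae_restrict_mem measurableSet_Ioc] with y hy
    obtain ⟨hy0, hy1⟩ := hy
    have hcy : 0 < c / y := div_pos hc hy0
    have hexp : Real.exp (-(c / y)) ≤ (Nat.factorial n : ℝ) * (y / c) ^ n := by
      have h1 : (c / y) ^ n / (Nat.factorial n : ℝ) ≤ Real.exp (c / y) :=
        pow_div_fact_le_exp hcy.le n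
      rw [Real.exp_neg]
      rw [inv_le_comm₀ (Real.exp_pos _) (by positivity)]
      calc ((Nat.factorial n : ℝ) * (y / c) ^ n)⁻¹
          = (c / y) ^ n / (Nat.factorial n : ℝ) := by
            rw [div_pow, div_pow]
            have hf : (0:ℝ) < (Nat.factorial n : ℝ) := by positivity
            field_simp
        _ ≤ Real.exp (c / y) := h1
    rw [Real.norm_eq_abs, abs_of_nonneg (by positivity)]
    calc Real.exp (-(c / y)) * y ^ a ≤ (Nat.factorial n : ℝ) * (y / c) ^ n * y ^ a :=
          mul_le_mul_of_nonneg_right hexp (Real.rpow_nonneg hy0.le _)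
      _ = (Nat.factorial n : ℝ) / c ^ n * (y ^ (n : ℝ) * y ^ a) := by
          rw [div_pow, Real.rpow_natCast]; ring
      _ = (Nat.factorial n : ℝ) / c ^ n * y ^ ((n : ℝ) + a) := by
          rw [← Real.rpow_add hy0]
      _ ≤ (Nat.factorial n : ℝ) / c ^ n * 1 := by
          have h2 : y ^ ((n : ℝ) + a) ≤ 1 := Real.rpow_le_one hy0.le hy1 (by
            have := Nat.le_ceil (-a)
            simp only [hn]
            linarith)
          exact mul_le_mul_of_nonneg_left h2 (by positivity)
      _ = (Nat.factorial n : ℝ) / c ^ n := mul_one _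
  · refine Integrable.mono (g := fun y : ℝ => y ^ a)
      (integrableOn_Ioi_rpow_of_lt ha one_pos) hmeas.aestronglyMeasurable ?_
    filter_upwards [ae_restrict_mem measurableSet_Ioi] with y hy
    have hy0 : (0:ℝ) < y := lt_trans one_pos hy
    rw [Real.norm_eq_abs, Real.norm_eq_abs, abs_of_nonneg (by positivity),
      abs_of_nonneg (Real.rpow_nonneg hy0.le _)]
    calc Real.exp (-(c / y)) * y ^ a ≤ 1 * y ^ a := by
          have h1 : Real.exp (-(c / y)) ≤ 1 := by
            rw [Real.exp_le_one_iff, Left.neg_nonpos_iff]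
            positivity
          exact mul_le_mul_of_nonneg_right h1 (Real.rpow_nonneg hy0.le _)
      _ = y ^ a := one_mul _

theorem besselKernel_eq (s x : ℝ) :
    besselKernel s x =
      ∫ y in Ioi (0:ℝ), Real.exp (-(π * x ^ 2) / y - y / (4 * π)) * y ^ ((s - 3) / 2) := by
  unfold besselKernel
  congr 1
  ext y
  congr 1
  norm_num
  ring

theorem besselKernel_meas (s : ℝ) : Measurable (besselKernel s) := by
  have hjm : Measurable fun q : ℝ × ℝ =>
      Real.exp (-(π * q.1 ^ 2) / q.2 - q.2 / (4 * π)) * q.2 ^ (-(1 + (1 - s) / 2)) := by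
    have h1 : Measurable fun q : ℝ × ℝ => -(π * q.1 ^ 2) / q.2 - q.2 / (4 * π) :=
      ((measurable_const.mul (measurable_fst.pow_const 2)).neg.div measurable_snd).sub
        (measurable_snd.div measurable_const)
    exact (Real.measurable_exp.comp h1).mul ((measurable_rpow_const' _).comp measurable_snd)
  exact (hjm.stronglyMeasurable.integral_prod_right').measurable

theorem besselKernel_nonneg (s x : ℝ) : 0 ≤ besselKernel s x := by
  refine setIntegral_nonneg measurableSet_Ioi fun y hy => ?_
  have : (0:ℝ) < y := hy
  positivity

/-- Measurability of the integrand in `y`. -/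
theorem measF (s x : ℝ) :
    Measurable fun y : ℝ => Real.exp (-(π * x ^ 2) / y - y / (4 * π)) * y ^ ((s - 3) / 2) :=
  (Real.measurable_exp.comp ((measurable_const.div measurable_id).sub
    (measurable_id.div measurable_const))).mul (measurable_rpow_const' _)

theorem intF_lt {s x : ℝ} (hs : s < 1) (hx : x ≠ 0) :
    IntegrableOn (fun y : ℝ =>
      Real.exp (-(π * x ^ 2) / y - y / (4 * π)) * y ^ ((s - 3) / 2)) (Ioi 0) := by
  have hc : (0:ℝ) < π * x ^ 2 / 2 := by positivity
  have ha : (s - 3) / 2 < -1 := by linarith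
  refine Integrable.mono (g := fun y : ℝ =>
      Real.exp (-(|x| / 2)) * (Real.exp (-(π * x ^ 2 / 2 / y)) * y ^ ((s - 3) / 2)))
    ((intA hc ha).const_mul _) (measF s x).aestronglyMeasurable ?_
  filter_upwards [ae_restrict_mem measurableSet_Ioi] with y hy
  have hy0 : (0:ℝ) < y := hy
  rw [Real.norm_eq_abs, Real.norm_eq_abs, abs_of_nonneg (by positivity),
    abs_of_nonneg (by positivity)]
  rw [← mul_assoc]
  exact mul_le_mul_of_nonneg_right (expA hy0) (Real.rpow_nonneg hy0.le _)

theorem intF_gt {s : ℝ} (hs : 1 < s) (x : ℝ) :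
    IntegrableOn (fun y : ℝ =>
      Real.exp (-(π * x ^ 2) / y - y / (4 * π)) * y ^ ((s - 3) / 2)) (Ioi 0) := by
  refine Integrable.mono (g := fun y : ℝ =>
      Real.exp (-(|x| / 2)) * (Real.exp (-(y / (8 * π))) * y ^ ((s - 3) / 2)))
    ((intB hs).const_mul _) (measF s x).aestronglyMeasurable ?_
  filter_upwards [ae_restrict_mem measurableSet_Ioi] with y hy
  have hy0 : (0:ℝ) < y := hy
  rw [Real.norm_eq_abs, Real.norm_eq_abs, abs_of_nonneg (by positivity),
    abs_of_nonneg (by positivity)]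
  rw [← mul_assoc]
  exact mul_le_mul_of_nonneg_right (expB hy0) (Real.rpow_nonneg hy0.le _)

/-- The constant in the bound for `s > 1`. -/
noncomputable def CB (s : ℝ) : ℝ :=
  ∫ y in Ioi (0:ℝ), Real.exp (-(y / (8 * π))) * y ^ ((s - 3) / 2)

/-- The constant in the bound for `s < 1`. -/
noncomputable def DA (s : ℝ) : ℝ :=
  ∫ t in Ioi (0:ℝ), Real.exp (-(π / 2 / t)) * t ^ ((s - 3) / 2)

theorem boundB {s : ℝ} (hs : 1 < s) (x : ℝ) :
    besselKernel s x ≤ Real.exp (-(|x| / 2)) * CB s := by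
  rw [besselKernel_eq, CB, ← integral_const_mul]
  refine integral_mono_of_nonneg ?_ ?_ ?_
  · filter_upwards [ae_restrict_mem measurableSet_Ioi] with y hy
    have hy0 : (0:ℝ) < y := hy
    positivity
  · exact (intB hs).const_mul _
  · filter_upwards [ae_restrict_mem measurableSet_Ioi] with y hy
    have hy0 : (0:ℝ) < y := hy
    rw [← mul_assoc]
    exact mul_le_mul_of_nonneg_right (expB hy0) (Real.rpow_nonneg hy0.le _)

theorem boundA {s x : ℝ} (hs : s < 1) (hx : x ≠ 0) :
    besselKernel s x ≤ Real.exp (-(|x| / 2)) * (|x| ^ (s - 1) * DA s) := by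
  have hx2 : (0:ℝ) < x ^ 2 := by positivity
  have hc : (0:ℝ) < π * x ^ 2 / 2 := by positivity
  have ha : (s - 3) / 2 < -1 := by linarith
  have step1 : besselKernel s x ≤
      Real.exp (-(|x| / 2)) * ∫ y in Ioi (0:ℝ),
        Real.exp (-(π * x ^ 2 / 2 / y)) * y ^ ((s - 3) / 2) := by
    rw [besselKernel_eq, ← integral_const_mul]
    refine integral_mono_of_nonneg ?_ ?_ ?_
    · filter_upwards [ae_restrict_mem measurableSet_Ioi] with y hy
      have hy0 : (0:ℝ) < y := hy
      positivity
    · exact (intA hc ha).const_mul _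
    · filter_upwards [ae_restrict_mem measurableSet_Ioi] with y hy
      have hy0 : (0:ℝ) < y := hy
      rw [← mul_assoc]
      exact mul_le_mul_of_nonneg_right (expA hy0) (Real.rpow_nonneg hy0.le _)
  have step2 : (∫ y in Ioi (0:ℝ), Real.exp (-(π * x ^ 2 / 2 / y)) * y ^ ((s - 3) / 2))
      = |x| ^ (s - 1) * DA s := by
    have h := integral_comp_mul_left_Ioi
      (g := fun y => Real.exp (-(π * x ^ 2 / 2 / y)) * y ^ ((s - 3) / 2)) 0 hx2
    rw [mul_zero] at h
    have h2 : ∀ t ∈ Ioi (0:ℝ),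
        Real.exp (-(π * x ^ 2 / 2 / (x ^ 2 * t))) * (x ^ 2 * t) ^ ((s - 3) / 2)
          = (x ^ 2) ^ ((s - 3) / 2) * (Real.exp (-(π / 2 / t)) * t ^ ((s - 3) / 2)) := by
      intro t ht
      have ht0 : (0:ℝ) < t := ht
      rw [Real.mul_rpow hx2.le ht0.le]
      have hq : π * x ^ 2 / 2 / (x ^ 2 * t) = π / 2 / t := by
        field_simp
      rw [hq]
      ring
    rw [setIntegral_congr_fun measurableSet_Ioi h2, integral_const_mul _ _, smul_eq_mul] at h
    have e1 : (x ^ 2 : ℝ) = |x| ^ (2:ℝ) := by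
      rw [show ((2:ℝ)) = ((2:ℕ):ℝ) by norm_num, Real.rpow_natCast, sq_abs]
    have hxx : (x ^ 2 : ℝ) * ((x ^ 2) ^ ((s - 3) / 2)) = |x| ^ (s - 1) := by
      rw [e1, ← Real.rpow_mul (abs_nonneg x), ← Real.rpow_add (abs_pos.mpr hx),
        show (2:ℝ) + 2 * ((s - 3) / 2) = s - 1 by ring]
    beta_reduce at h
    calc (∫ y in Ioi (0:ℝ), Real.exp (-(π * x ^ 2 / 2 / y)) * y ^ ((s - 3) / 2))
        = (x ^ 2) * ((x ^ 2) ^ ((s - 3) / 2) * DA s) := by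
          rw [DA, h, ← mul_assoc, mul_inv_cancel₀ hx2.ne', one_mul]
      _ = |x| ^ (s - 1) * DA s := by rw [← mul_assoc, hxx]
  calc besselKernel s x ≤ _ := step1
    _ = Real.exp (-(|x| / 2)) * (|x| ^ (s - 1) * DA s) := by rw [step2]

theorem split_bound {s s₁ s₂ x : ℝ} (h₁ : s₁ ≤ s) (h₂ : s ≤ s₂) (hs₁ : s₁ < 1)
    (hs₂ : 1 < s₂) (hx : x ≠ 0) :
    besselKernel s x ≤ besselKernel s₁ x + besselKernel s₂ x := by
  rw [besselKernel_eq s, besselKernel_eq s₁, besselKernel_eq s₂, ← integral_add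
    (intF_lt hs₁ hx) (intF_gt hs₂ x)]
  refine integral_mono_of_nonneg ?_ ((intF_lt hs₁ hx).add (intF_gt hs₂ x)) ?_
  · filter_upwards [ae_restrict_mem measurableSet_Ioi] with y hy
    have hy0 : (0:ℝ) < y := hy
    positivity
  · filter_upwards [ae_restrict_mem measurableSet_Ioi] with y hy
    have hy0 : (0:ℝ) < y := hy
    have hr : y ^ ((s - 3) / 2) ≤ y ^ ((s₁ - 3) / 2) + y ^ ((s₂ - 3) / 2) := by
      rcases le_total y 1 with hy1 | hy1
      · have := Real.rpow_le_rpow_of_exponent_ge hy0 hy1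
          (by linarith : (s₁ - 3) / 2 ≤ (s - 3) / 2)
        have h0 : (0:ℝ) ≤ y ^ ((s₂ - 3) / 2) := Real.rpow_nonneg hy0.le _
        linarith
      · have := Real.rpow_le_rpow_of_exponent_le hy1
          (by linarith : (s - 3) / 2 ≤ (s₂ - 3) / 2)
        have h0 : (0:ℝ) ≤ y ^ ((s₁ - 3) / 2) := Real.rpow_nonneg hy0.le _
        linarith
    calc Real.exp (-(π * x ^ 2) / y - y / (4 * π)) * y ^ ((s - 3) / 2)
        ≤ Real.exp (-(π * x ^ 2) / y - y / (4 * π)) *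
            (y ^ ((s₁ - 3) / 2) + y ^ ((s₂ - 3) / 2)) :=
          mul_le_mul_of_nonneg_left hr (Real.exp_nonneg _)
      _ = Real.exp (-(π * x ^ 2) / y - y / (4 * π)) * y ^ ((s₁ - 3) / 2) +
            Real.exp (-(π * x ^ 2) / y - y / (4 * π)) * y ^ ((s₂ - 3) / 2) := by ring

theorem integrable_abs_rpow_mul_exp_neg_mul_abs {a b : ℝ} (ha : -1 < a) (hb : 0 < b) :
    Integrable (fun x : ℝ => |x| ^ a * Real.exp (-(b * |x|))) := by
  have hIoi : IntegrableOn (fun x : ℝ => |x| ^ a * Real.exp (-(b * |x|))) (Ioi 0) := by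
    have h := integrableOn_rpow_mul_exp_neg_mul_rpow (p := 1) (s := a) (b := b) ha one_pos hb
    refine h.congr_fun (fun x hx => ?_) measurableSet_Ioi
    have hx0 : (0:ℝ) < x := hx
    dsimp only
    rw [abs_of_pos hx0, Real.rpow_one]
    ring_nf
  rw [← integrableOn_univ, show (univ : Set ℝ) = Iio 0 ∪ Ici 0 by rw [Iio_union_Ici]]
  rw [integrableOn_union, integrableOn_Ici_iff_integrableOn_Ioi]
  refine ⟨?_, hIoi⟩
  rw [← Measure.measurePreserving_neg (volume : Measure ℝ) |>.integrableOn_comp_preimage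
    (Homeomorph.neg ℝ).measurableEmbedding]
  have hpre : Neg.neg ⁻¹' (Iio (0:ℝ)) = Ioi 0 := by ext z; simp
  rw [hpre]
  refine hIoi.congr_fun (fun x hx => ?_) measurableSet_Ioi
  simp [abs_neg]

theorem memLp_of_int {p : ℝ≥0∞} (hp0 : p ≠ 0) (hpt : p ≠ ∞) {f : ℝ → ℝ}
    (hm : AEStronglyMeasurable f (volume : Measure ℝ))
    (hi : Integrable (fun x => ‖f x‖ ^ p.toReal) (volume : Measure ℝ)) :
    MemLp f p (volume : Measure ℝ) := by
  have h := (memLp_norm_rpow_iff (p := p) (q := p) hm hp0 hpt)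
  rw [ENNReal.div_self hp0 hpt] at h
  exact h.mp (memLp_one_iff_integrable.mpr hi)

theorem memLp_exp (p : ℝ≥0∞) :
    MemLp (fun x : ℝ => Real.exp (-(|x| / 2))) p (volume : Measure ℝ) := by
  have hmeas : Measurable fun x : ℝ => Real.exp (-(|x| / 2)) :=
    Real.measurable_exp.comp (measurable_abs.div measurable_const).neg
  by_cases hpt : p = ∞
  · rw [hpt]
    refine memLp_top_of_bound hmeas.aestronglyMeasurable 1 ?_
    filter_upwards with x
    rw [Real.norm_eq_abs, abs_of_nonneg (Real.exp_nonneg _)]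
    rw [Real.exp_le_one_iff, Left.neg_nonpos_iff]
    positivity
  by_cases hp0 : p = 0
  · rw [hp0, memLp_zero_iff_aestronglyMeasurable]
    exact hmeas.aestronglyMeasurable
  have hpr : 0 < p.toReal := ENNReal.toReal_pos hp0 hpt
  refine memLp_of_int hp0 hpt hmeas.aestronglyMeasurable ?_
  refine (integrable_abs_rpow_mul_exp_neg_mul_abs (a := 0) (b := p.toReal / 2)
    (by norm_num) (by positivity)).congr ?_
  filter_upwards with x
  rw [Real.rpow_zero, one_mul, Real.norm_eq_abs, abs_of_nonneg (Real.exp_nonneg _),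
    ← Real.exp_mul, show -(|x| / 2) * p.toReal = -(p.toReal / 2 * |x|) by ring]

theorem memLp_exp_rpow {p : ℝ≥0∞} (hp0 : p ≠ 0) (hpt : p ≠ ∞) {a : ℝ}
    (ha : -1 < a * p.toReal) :
    MemLp (fun x : ℝ => Real.exp (-(|x| / 2)) * |x| ^ a) p (volume : Measure ℝ) := by
  have hpr : 0 < p.toReal := ENNReal.toReal_pos hp0 hpt
  have hmeas : Measurable fun x : ℝ => Real.exp (-(|x| / 2)) * |x| ^ a :=
    (Real.measurable_exp.comp (measurable_abs.div measurable_const).neg).mul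
      ((measurable_rpow_const' a).comp measurable_abs)
  refine memLp_of_int hp0 hpt hmeas.aestronglyMeasurable ?_
  refine (integrable_abs_rpow_mul_exp_neg_mul_abs (a := a * p.toReal) (b := p.toReal / 2)
    ha (by positivity)).congr ?_
  filter_upwards with x
  rw [Real.norm_eq_abs, abs_mul, abs_of_nonneg (Real.exp_nonneg _),
    abs_of_nonneg (Real.rpow_nonneg (abs_nonneg x) _),
    Real.mul_rpow (Real.exp_nonneg _) (Real.rpow_nonneg (abs_nonneg x) _),
    ← Real.rpow_mul (abs_nonneg x), ← Real.exp_mul,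
    show -(|x| / 2) * p.toReal = -(p.toReal / 2 * |x|) by ring]
  ring

end BesselAux

open BesselAux

/-- For `s > 0` and `p ∈ [1,∞]` with `s > 1 - 1/p` (where `1/∞ = 0`), the Bessel kernel
`G̃ₛ` belongs to `L^p(ℝ)`. -/
theorem besselKernel_memLp (s : ℝ) (hs : 0 < s) (p : ℝ≥0∞) (hp : 1 ≤ p)
    (hsp : 1 - 1 / p.toReal < s) :
    MemLp (besselKernel s) p (volume : Measure ℝ) := by
  by_cases hs1 : 1 < s
  · refine MemLp.of_le ((memLp_exp p).const_mul (CB s))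
      (besselKernel_meas s).aestronglyMeasurable ?_
    filter_upwards with x
    rw [Real.norm_eq_abs, abs_of_nonneg (besselKernel_nonneg s x)]
    calc besselKernel s x ≤ Real.exp (-(|x| / 2)) * CB s := boundB hs1 x
      _ = CB s * Real.exp (-(|x| / 2)) := mul_comm _ _
      _ ≤ ‖CB s * Real.exp (-(|x| / 2))‖ := le_abs_self _
  · push_neg at hs1
    have hp0 : p ≠ 0 := by
      intro h
      rw [h] at hp
      simp at hp
    have hpt : p ≠ ∞ := by
      intro h
      rw [h] at hsp
      simp at hsp
      exact hs1.not_gt hsp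
    have hpr : 0 < p.toReal := ENNReal.toReal_pos hp0 hpt
    set pr := p.toReal with hprdef
    have hm : max (1 - 1 / pr) 0 < s := max_lt hsp hs
    set s₁ : ℝ := (max (1 - 1 / pr) 0 + s) / 2 with hs₁def
    have hmax0 : (0:ℝ) ≤ max (1 - 1 / pr) 0 := le_max_right _ _
    have hmax1 : 1 - 1 / pr ≤ max (1 - 1 / pr) 0 := le_max_left _ _
    have h1pr : 1 - 1 / pr < 1 := by
      have : 0 < 1 / pr := by positivity
      linarith
    have hmaxlt1 : max (1 - 1 / pr) 0 < 1 := max_lt h1pr one_pos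
    have hs₁lt1 : s₁ < 1 := by rw [hs₁def]; linarith
    have hs₁lts : s₁ < s := by rw [hs₁def]; linarith
    have hs₁gt : 1 - 1 / pr < s₁ := by rw [hs₁def]; linarith
    have hs2 : (1:ℝ) < s + 2 := by linarith
    have hbound : ∀ x : ℝ, x ≠ 0 → besselKernel s x ≤
        DA s₁ * (Real.exp (-(|x| / 2)) * |x| ^ (s₁ - 1)) +
          CB (s + 2) * Real.exp (-(|x| / 2)) := by
      intro x hx
      calc besselKernel s x ≤ besselKernel s₁ x + besselKernel (s + 2) x :=
            split_bound hs₁lts.le (by linarith) hs₁lt1 hs2 hx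
        _ ≤ Real.exp (-(|x| / 2)) * (|x| ^ (s₁ - 1) * DA s₁) +
              Real.exp (-(|x| / 2)) * CB (s + 2) :=
            add_le_add (boundA hs₁lt1 hx) (boundB hs2 x)
        _ = DA s₁ * (Real.exp (-(|x| / 2)) * |x| ^ (s₁ - 1)) +
              CB (s + 2) * Real.exp (-(|x| / 2)) := by ring
    have hG : MemLp (fun x : ℝ => DA s₁ * (Real.exp (-(|x| / 2)) * |x| ^ (s₁ - 1)) +
        CB (s + 2) * Real.exp (-(|x| / 2))) p (volume : Measure ℝ) := by
      refine MemLp.add ?_ ?_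
      · refine (memLp_exp_rpow hp0 hpt ?_).const_mul _
        have h1 := mul_lt_mul_of_pos_right hs₁gt hpr
        have h2 : (1 - 1 / pr) * pr = pr - 1 := by field_simp
        rw [h2] at h1
        nlinarith
      · exact (memLp_exp p).const_mul _
    refine MemLp.of_le hG (besselKernel_meas s).aestronglyMeasurable ?_
    have hae : ∀ᵐ x : ℝ, x ≠ 0 := by
      refine compl_mem_ae_iff.mpr ?_
      exact measure_singleton (0:ℝ)
    filter_upwards [hae] with x hx
    rw [Real.norm_eq_abs, abs_of_nonneg (besselKernel_nonneg s x)]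
    exact (hbound x hx).trans (le_abs_self _)
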